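/- lim_{r→∞} ( (r/ξ_{1,r})·log 2 − r·log 8 ) = (1/2)(log 9 − log 8); equivalently, 2^{−r/ξ_{1,r}} · 8^{r} → (8/9)^{1/2} as r → ∞. -/

import Mathlib

open Filter Real

noncomputable def phiAux (x : ℝ) : ℝ := Real.log ((1/3 : ℝ) ^ x + (2/3 : ℝ) ^ x)

lemma phiAux_hasDeriv :
    HasDerivAt phiAux ((Real.log (1/3) + Real.log (2/3)) / 2) 0 := by
  have h1 : HasDerivAt (fun x : ℝ => (1/3 : ℝ) ^ x)
      ((1/3 : ℝ) ^ (0:ℝ) * Real.log (1/3)) 0 :=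
    (Real.hasStrictDerivAt_const_rpow (by norm_num) 0).hasDerivAt
  have h2 : HasDerivAt (fun x : ℝ => (2/3 : ℝ) ^ x)
      ((2/3 : ℝ) ^ (0:ℝ) * Real.log (2/3)) 0 :=
    (Real.hasStrictDerivAt_const_rpow (by norm_num) 0).hasDerivAt
  have hsum := h1.add h2
  have hne : (1/3 : ℝ) ^ (0:ℝ) + (2/3 : ℝ) ^ (0:ℝ) ≠ 0 := by
    simp [Real.rpow_zero]
  have h := hsum.log hne
  have hval : ((1/3:ℝ) ^ (0:ℝ) * Real.log (1/3) + (2/3:ℝ) ^ (0:ℝ) * Real.log (2/3)) /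
      ((1/3:ℝ) ^ (0:ℝ) + (2/3:ℝ) ^ (0:ℝ)) = (Real.log (1/3) + Real.log (2/3)) / 2 := by
    rw [Real.rpow_zero, Real.rpow_zero]; ring
  exact hval ▸ h

/-- For `t₁ = 1/3`, `t₂ = 2/3`, `s₁ = s₂ = 1/8`:
`(r/ξ_{1,r})·log 2 − r·log 8 → (1/2)(log 9 − log 8)` as `r → ∞`. -/
theorem xi_one_limit
    (ξ1 : ℝ → ℝ)
    (hξ1 : ∀ r : ℝ, 0 < r → 0 < ξ1 r ∧
      ((1 / 3 : ℝ) * (8 : ℝ) ^ (-r)) ^ (ξ1 r / (ξ1 r + r)) +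
        ((2 / 3 : ℝ) * (8 : ℝ) ^ (-r)) ^ (ξ1 r / (ξ1 r + r)) = 1) :
    Filter.Tendsto (fun r : ℝ => r / ξ1 r * Real.log 2 - r * Real.log 8)
      Filter.atTop (nhds ((1 / 2) * (Real.log 9 - Real.log 8))) := by
  set θ : ℝ → ℝ := fun r => ξ1 r / (ξ1 r + r) with hθdef
  have hθpos : ∀ r : ℝ, 0 < r → 0 < θ r := fun r hr =>
    div_pos (hξ1 r hr).1 (by linarith [(hξ1 r hr).1])
  -- the key functional equation
  have hkey : ∀ r : ℝ, 0 < r → phiAux (θ r) = r * θ r * Real.log 8 := by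
    intro r hr
    obtain ⟨hx, heq⟩ := hξ1 r hr
    have h8 : (0:ℝ) < (8:ℝ) ^ (-r) := Real.rpow_pos_of_pos (by norm_num) _
    have hmul1 : ((1/3 : ℝ) * (8:ℝ)^(-r)) ^ (θ r)
        = (1/3 : ℝ) ^ (θ r) * ((8:ℝ)^(-r)) ^ (θ r) :=
      Real.mul_rpow (by norm_num) h8.le
    have hmul2 : ((2/3 : ℝ) * (8:ℝ)^(-r)) ^ (θ r)
        = (2/3 : ℝ) ^ (θ r) * ((8:ℝ)^(-r)) ^ (θ r) :=
      Real.mul_rpow (by norm_num) h8.le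
    have hpow : ((8:ℝ)^(-r)) ^ (θ r) = (8:ℝ) ^ (-(r * θ r)) := by
      rw [← Real.rpow_mul (by norm_num : (0:ℝ) ≤ 8)]
      ring_nf
    have hsum : (1/3 : ℝ) ^ (θ r) + (2/3 : ℝ) ^ (θ r) = (8:ℝ) ^ (r * θ r) := by
      have h8' : (0:ℝ) < (8:ℝ) ^ (-(r * θ r)) := Real.rpow_pos_of_pos (by norm_num) _
      have : ((1/3 : ℝ) ^ (θ r) + (2/3 : ℝ) ^ (θ r)) * (8:ℝ) ^ (-(r * θ r)) = 1 := by
        rw [add_mul, ← hpow, ← hmul1, ← hmul2]; exact heq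
      have h2 : (8:ℝ) ^ (-(r * θ r)) * (8:ℝ) ^ (r * θ r) = 1 := by
        rw [← Real.rpow_add (by norm_num : (0:ℝ) < 8)]; simp
      calc (1/3 : ℝ) ^ (θ r) + (2/3 : ℝ) ^ (θ r)
          = ((1/3 : ℝ) ^ (θ r) + (2/3 : ℝ) ^ (θ r)) * ((8:ℝ) ^ (-(r * θ r)) * (8:ℝ) ^ (r * θ r)) := by
            rw [h2, mul_one]
        _ = (((1/3 : ℝ) ^ (θ r) + (2/3 : ℝ) ^ (θ r)) * (8:ℝ) ^ (-(r * θ r))) * (8:ℝ) ^ (r * θ r) := by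
            ring
        _ = (8:ℝ) ^ (r * θ r) := by rw [this, one_mul]
    rw [phiAux, hsum, Real.log_rpow (by norm_num)]
  -- θ r → 0 within (0, ∞)
  have hθsmall : ∀ r : ℝ, 0 < r → θ r ≤ Real.log 2 / (r * Real.log 8) := by
    intro r hr
    have hlog8 : (0:ℝ) < Real.log 8 := Real.log_pos (by norm_num)
    have hle : (1/3 : ℝ) ^ (θ r) + (2/3 : ℝ) ^ (θ r) ≤ 2 := by
      have a1 : (1/3 : ℝ) ^ (θ r) ≤ 1 :=
        Real.rpow_le_one (by norm_num) (by norm_num) (hθpos r hr).le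
      have a2 : (2/3 : ℝ) ^ (θ r) ≤ 1 :=
        Real.rpow_le_one (by norm_num) (by norm_num) (hθpos r hr).le
      linarith
    have hφle : phiAux (θ r) ≤ Real.log 2 := by
      rw [phiAux]
      exact Real.log_le_log (by positivity) hle
    rw [hkey r hr] at hφle
    rw [le_div_iff₀ (by positivity)]
    nlinarith [hφle]
  have htendsto0 : Tendsto θ atTop (nhds 0) := by
    have hbound : Tendsto (fun r : ℝ => Real.log 2 / (r * Real.log 8)) atTop (nhds 0) := by
      have : Tendsto (fun r : ℝ => r * Real.log 8) atTop atTop :=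
        Tendsto.atTop_mul_const (Real.log_pos (by norm_num)) tendsto_id
      exact Tendsto.div_atTop tendsto_const_nhds this
    refine squeeze_zero' ?_ ?_ hbound
    · filter_upwards [eventually_gt_atTop 0] with r hr using (hθpos r hr).le
    · filter_upwards [eventually_gt_atTop 0] with r hr using hθsmall r hr
  have hθne : Tendsto θ atTop (nhdsWithin 0 {(0:ℝ)}ᶜ) := by
    rw [tendsto_nhdsWithin_iff]
    exact ⟨htendsto0, by
      filter_upwards [eventually_gt_atTop 0] with r hr using (hθpos r hr).ne'⟩
  -- slope limit
  have hslope : Tendsto (slope phiAux 0) (nhdsWithin 0 {(0:ℝ)}ᶜ)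
      (nhds ((Real.log (1/3) + Real.log (2/3)) / 2)) :=
    hasDerivAt_iff_tendsto_slope.mp phiAux_hasDeriv
  have hcomp : Tendsto (fun r => slope phiAux 0 (θ r)) atTop
      (nhds ((Real.log (1/3) + Real.log (2/3)) / 2)) := hslope.comp hθne
  have hfinal : Tendsto (fun r => -(slope phiAux 0 (θ r)) - Real.log 2) atTop
      (nhds (-((Real.log (1/3) + Real.log (2/3)) / 2) - Real.log 2)) :=
    (hcomp.neg).sub_const _
  have hval : -((Real.log (1/3) + Real.log (2/3)) / 2) - Real.log 2
      = (1/2) * (Real.log 9 - Real.log 8) := by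
    have l13 : Real.log (1/3 : ℝ) = -Real.log 3 := by
      rw [one_div, Real.log_inv]
    have l23 : Real.log (2/3 : ℝ) = Real.log 2 - Real.log 3 := by
      rw [Real.log_div (by norm_num) (by norm_num)]
    have l9 : Real.log (9:ℝ) = 2 * Real.log 3 := by
      rw [show (9:ℝ) = 3 ^ (2:ℕ) by norm_num, Real.log_pow]; push_cast; ring
    have l8 : Real.log (8:ℝ) = 3 * Real.log 2 := by
      rw [show (8:ℝ) = 2 ^ (3:ℕ) by norm_num, Real.log_pow]; push_cast; ring
    rw [l13, l23, l9, l8]; ring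
  rw [← hval]
  refine hfinal.congr' ?_
  filter_upwards [eventually_gt_atTop 0] with r hr
  obtain ⟨hx, _⟩ := hξ1 r hr
  have hθr := hθpos r hr
  have hφ0 : phiAux 0 = Real.log 2 := by
    simp [phiAux, Real.rpow_zero]; norm_num
  have hsl : slope phiAux 0 (θ r) = (r * θ r * Real.log 8 - Real.log 2) / θ r := by
    rw [slope_def_field, hkey r hr, hφ0, sub_zero]
  rw [hsl]
  have hxr : (0:ℝ) < ξ1 r + r := by linarith
  have hθval : θ r = ξ1 r / (ξ1 r + r) := rfl
  field_simp [hθval]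
  have key : θ r * (ξ1 r + r) = ξ1 r := by rw [hθval]; exact div_mul_cancel₀ _ hxr.ne'
  linear_combination (-Real.log 2) * key
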